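/- Let p be a prime, n ≥ 1, and t ∈ {0, 1, …, n−1}. Let F be a field containing a primitive p^{n−t}-th root of unity but containing no primitive p^{n−t+1}-th root of unity. Let ψ : Z/p^nZ → GL_{p^n}(F) be an injective group homomorphism, and let the cyclic group C = Z/p^nZ act on the rational function field L = F(μ_1, …, μ_{p^n}) by F-algebra automorphisms extending the linear action ψ on the F-vector space spanned by the indeterminates μ_1, …, μ_{p^n}. Let E = L^C, and for 0 ≤ i ≤ n let L_i be the fixed field of the unique subgroup of C of order p^{n−i}, so that E = L_0 ⊆ L_1 ⊆ ⋯ ⊆ L_n = L and [L_i : E] = p^i. Then for each 0 ≤ i ≤ n, ξ_p ∈ N_{L/L_i}(L×) if and only if i ≥ t + 1; that is, m(L/E) = t. -/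

import Mathlib

set_option synthInstance.maxHeartbeats 1000000

set_option maxHeartbeats 1000000

theorem norm_unit_key {R : Type*} [CommRing R] [IsDomain R] [UniqueFactorizationMonoid R]
    {G : Type*} [CommGroup G] {m : ℕ} [Fintype {g : G // g ^ m = 1}]
    (σ : G →* (R ≃+* R)) (r : R) :
    ∀ s u : R, r ≠ 0 → s ≠ 0 → IsUnit u →
      (∏ g : {g : G // g ^ m = 1}, σ (g : G) r)
        = u * ∏ g : {g : G // g ^ m = 1}, σ (g : G) s →
      ∃ w : R, IsUnit w ∧ u = ∏ g : {g : G // g ^ m = 1}, σ (g : G) w := by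
  have hσne : ∀ (g : G) (y : R), y ≠ 0 → σ g y ≠ 0 := fun g y hy h0 =>
    hy ((σ g).injective (h0.trans (map_zero _).symm))
  have hprodne : ∀ y : R, y ≠ 0 →
      (∏ g : {g : G // g ^ m = 1}, σ (g : G) y) ≠ 0 := fun y hy =>
    Finset.prod_ne_zero_iff.mpr fun g _ => hσne _ _ hy
  refine wellFounded_dvdNotUnit.induction
    (C := fun r : R => ∀ s u : R, r ≠ 0 → s ≠ 0 → IsUnit u →
      (∏ g : {g : G // g ^ m = 1}, σ (g : G) r)
        = u * ∏ g : {g : G // g ^ m = 1}, σ (g : G) s →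
      ∃ w : R, IsUnit w ∧ u = ∏ g : {g : G // g ^ m = 1}, σ (g : G) w) r ?_
  clear r
  intro r ih s u hr hs hu heq
  by_cases hru : IsUnit r
  · -- base case
    have hprod_r : IsUnit (∏ g : {g : G // g ^ m = 1}, σ (g : G) r) :=
      Finset.univ.prod_induction _ IsUnit (fun _ _ => IsUnit.mul) isUnit_one
        (fun g _ => hru.map (σ (g : G)))
    have hprod_s : IsUnit (∏ g : {g : G // g ^ m = 1}, σ (g : G) s) :=
      isUnit_of_mul_isUnit_right (heq ▸ hprod_r)
    have hdvd : s ∣ ∏ g : {g : G // g ^ m = 1}, σ (g : G) s := by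
      have h := Finset.dvd_prod_of_mem (fun g : {g : G // g ^ m = 1} => σ (g : G) s)
        (Finset.mem_univ (⟨1, one_pow m⟩ : {g : G // g ^ m = 1}))
      simpa using h
    have hsu : IsUnit s := isUnit_of_dvd_unit hdvd hprod_s
    obtain ⟨sᵤ, rfl⟩ := hsu
    obtain ⟨rᵤ, rfl⟩ := hru
    refine ⟨((rᵤ * sᵤ⁻¹ : Rˣ) : R), Units.isUnit _, ?_⟩
    have hrw : (rᵤ : R) = ((rᵤ * sᵤ⁻¹ : Rˣ) : R) * (sᵤ : R) := by
      rw [← Units.val_mul, inv_mul_cancel_right]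
    rw [hrw] at heq
    simp only [map_mul, Finset.prod_mul_distrib] at heq
    exact (mul_right_cancel₀ (hprodne _ hs) heq).symm
  · -- inductive step
    obtain ⟨π, hπirr, hπdvd⟩ := WfDvdMonoid.exists_irreducible_factor hru hr
    have hπ : Prime π := UniqueFactorizationMonoid.irreducible_iff_prime.mp hπirr
    obtain ⟨r', rfl⟩ := hπdvd
    have hr' : r' ≠ 0 := fun h => hr (by simp [h])
    -- π divides the RHS
    have h1 : π ∣ u * ∏ g : {g : G // g ^ m = 1}, σ (g : G) s := by
      rw [← heq]
      refine dvd_trans (dvd_mul_right π r') ?_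
      have h := Finset.dvd_prod_of_mem (fun g : {g : G // g ^ m = 1} => σ (g : G) (π * r'))
        (Finset.mem_univ (⟨1, one_pow m⟩ : {g : G // g ^ m = 1}))
      simpa using h
    have h2 : π ∣ ∏ g : {g : G // g ^ m = 1}, σ (g : G) s := by
      rcases hπ.2.2 _ _ h1 with h | h
      · exact absurd (isUnit_of_dvd_unit h hu) hπ.not_unit
      · exact h
    obtain ⟨g₀, -, hg₀⟩ := hπ.exists_mem_finset_dvd h2
    set π' : R := σ ((g₀ : G)⁻¹) π with hπ'def
    have hcomp : ∀ (c d : G) (y : R), σ c (σ d y) = σ (c * d) y := fun c d y => by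
      rw [map_mul σ]; rfl
    have hπ's : π' ∣ s := by
      have h := map_dvd (σ ((g₀ : G)⁻¹)) hg₀
      rw [hcomp, inv_mul_cancel, map_one σ] at h
      exact h
    obtain ⟨s', rfl⟩ := hπ's
    have hs' : s' ≠ 0 := fun h => hs (by simp [h])
    -- reindex the product of π'
    have hre : (∏ g : {g : G // g ^ m = 1}, σ (g : G) π')
        = ∏ g : {g : G // g ^ m = 1}, σ (g : G) π := by
      let e : {g : G // g ^ m = 1} ≃ {g : G // g ^ m = 1} :=
        { toFun := fun g => ⟨(g : G) * (g₀ : G)⁻¹, by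
            rw [mul_pow, inv_pow, g.2, g₀.2, inv_one, mul_one]⟩
          invFun := fun g => ⟨(g : G) * (g₀ : G), by rw [mul_pow, g.2, g₀.2, mul_one]⟩
          left_inv := fun g => by ext; simp
          right_inv := fun g => by ext; simp }
      calc (∏ g : {g : G // g ^ m = 1}, σ (g : G) π')
          = ∏ g : {g : G // g ^ m = 1}, (fun c : {g : G // g ^ m = 1} => σ (c : G) π) (e g) := by
            refine Finset.prod_congr rfl fun g _ => ?_
            exact hcomp (g : G) ((g₀ : G)⁻¹) π
        _ = ∏ g : {g : G // g ^ m = 1}, σ (g : G) π :=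
          Equiv.prod_comp e (fun c : {g : G // g ^ m = 1} => σ (c : G) π)
    simp only [map_mul, Finset.prod_mul_distrib, hre] at heq
    rw [mul_left_comm] at heq
    have heq' : (∏ g : {g : G // g ^ m = 1}, σ (g : G) r')
        = u * ∏ g : {g : G // g ^ m = 1}, σ (g : G) s' :=
      mul_left_cancel₀ (hprodne _ hπ.ne_zero) heq
    exact ih r' ⟨hr', π, hπ.not_unit, mul_comm π r'⟩ s' u hr' hs' hu heq'



theorem card_torsion (N d c : ℕ) [NeZero N] (hd : 0 < d) (hc : 0 < c) (hN : N = d * c) :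
    Fintype.card {g : Multiplicative (ZMod N) // g ^ d = 1} = d := by
  subst hN
  have hdc : 0 < d * c := by positivity
  have key : ∀ g : Multiplicative (ZMod (d * c)),
      g ^ d = 1 ↔ (d : ZMod (d * c)) * (Multiplicative.toAdd g) = 0 := by
    intro g
    constructor
    · intro h
      have h2 := congrArg Multiplicative.toAdd h
      rw [toAdd_pow, toAdd_one, nsmul_eq_mul] at h2
      exact h2
    · intro h
      apply Multiplicative.toAdd.injective
      rw [toAdd_pow, toAdd_one, nsmul_eq_mul]
      exact h
  let f : Fin d → {g : Multiplicative (ZMod (d * c)) // g ^ d = 1} := fun y =>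
    ⟨Multiplicative.ofAdd (((c * (y : ℕ) : ℕ) : ZMod (d * c))), by
      rw [key]
      simp only [toAdd_ofAdd]
      rw [← Nat.cast_mul, ZMod.natCast_eq_zero_iff]
      exact ⟨(y : ℕ), by ring⟩⟩
  have hf : Function.Bijective f := by
    constructor
    · intro y y' h
      have h2 : ((c * (y : ℕ) : ℕ) : ZMod (d * c)) = ((c * (y' : ℕ) : ℕ) : ZMod (d * c)) := by
        have := congrArg (fun z => Multiplicative.toAdd (z : Multiplicative (ZMod (d*c)))) (congrArg Subtype.val h)
        simpa [f] using this
      have hlt : c * (y : ℕ) < d * c := by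
        calc c * (y : ℕ) < c * d := (Nat.mul_lt_mul_left hc).mpr y.2
          _ = d * c := Nat.mul_comm c d
      have hlt' : c * (y' : ℕ) < d * c := by
        calc c * (y' : ℕ) < c * d := (Nat.mul_lt_mul_left hc).mpr y'.2
          _ = d * c := Nat.mul_comm c d
      have := congrArg ZMod.val h2
      rw [ZMod.val_cast_of_lt hlt, ZMod.val_cast_of_lt hlt'] at this
      exact Fin.ext (Nat.eq_of_mul_eq_mul_left hc this)
    · rintro ⟨g, hg⟩
      rw [key] at hg
      set x : ZMod (d * c) := Multiplicative.toAdd g with hx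
      have hval : ((d * x.val : ℕ) : ZMod (d * c)) = 0 := by
        push_cast
        rw [ZMod.natCast_val, ZMod.cast_id]
        exact hg
      rw [ZMod.natCast_eq_zero_iff] at hval
      have hcd : c ∣ x.val := by
        have := (Nat.mul_dvd_mul_iff_left hd).mp hval
        exact this
      obtain ⟨y, hy⟩ := hcd
      have hylt : y < d := by
        have hxlt : x.val < d * c := ZMod.val_lt x
        have h1 : c * y < c * d := by
          rw [← hy, Nat.mul_comm c d]; exact hxlt
        exact Nat.lt_of_mul_lt_mul_left h1
      refine ⟨⟨y, hylt⟩, ?_⟩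
      apply Subtype.ext
      show Multiplicative.ofAdd (((c * y : ℕ) : ZMod (d * c))) = g
      rw [← hy, ZMod.natCast_val, ZMod.cast_id, hx]
      exact ofAdd_toAdd g
  calc Fintype.card {g : Multiplicative (ZMod (d * c)) // g ^ d = 1}
      = Fintype.card (Fin d) := (Fintype.card_of_bijective hf).symm
    _ = d := Fintype.card_fin d

set_option synthInstance.maxHeartbeats 1000000
set_option maxHeartbeats 1000000

/-- Let `p` be a prime, `n ≥ 1`, `t ∈ {0,…,n−1}`, and let `F` be a
field containing a primitive `p^(n−t)`-th root of unity but no primitive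
`p^(n−t+1)`-th root of unity.  Let the cyclic group `C` of order `a = p^n` (realized as
`Multiplicative (ZMod a)`) act on the rational function field
`L = F(μ_1, …, μ_{p^n})` (realized as the fraction field of the polynomial ring in
`a` indeterminates) by `F`-algebra automorphisms extending a faithful linear
representation `ψ : C → GL_{p^n}(F)` on the `F`-span of the indeterminates.  Let
`E = L^C`, and for `0 ≤ i ≤ n` let `L_i` be the fixed field of the unique subgroup
`H_i = {g : C | g^(p^(n−i)) = 1}` of order `p^(n−i)`, so that
`N_{L/L_i}(x) = ∏_{g ∈ H_i} g • x`.  Then for every primitive `p`-th root of unity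
`ξ_p ∈ F` and every `0 ≤ i ≤ n`:  `ξ_p ∈ N_{L/L_i}(L×)` if and only if `i ≥ t + 1`;
that is, `m(L/E) = t`. -/
theorem statement12 (p n t a : ℕ) (hp : p.Prime) (ht : t < n) (ha : a = p ^ n)
    [NeZero a]
    (F : Type) [Field F]
    (hroot : ∃ ζ : F, IsPrimitiveRoot ζ (p ^ (n - t)))
    (hnoroot : ¬ ∃ ζ : F, IsPrimitiveRoot ζ (p ^ (n - t + 1)))
    (ψ : Multiplicative (ZMod a) →* Matrix.GeneralLinearGroup (Fin a) F)
    (hψ : Function.Injective ψ)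
    [MulSemiringAction (Multiplicative (ZMod a)) (FractionRing (MvPolynomial (Fin a) F))]
    (hfix : ∀ (g : Multiplicative (ZMod a)) (c : F),
      g • algebraMap (MvPolynomial (Fin a) F) (FractionRing (MvPolynomial (Fin a) F))
            (MvPolynomial.C c)
        = algebraMap (MvPolynomial (Fin a) F) (FractionRing (MvPolynomial (Fin a) F))
            (MvPolynomial.C c))
    (hlin : ∀ (g : Multiplicative (ZMod a)) (j : Fin a),
      g • algebraMap (MvPolynomial (Fin a) F) (FractionRing (MvPolynomial (Fin a) F))
            (MvPolynomial.X j)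
        = algebraMap (MvPolynomial (Fin a) F) (FractionRing (MvPolynomial (Fin a) F))
            (∑ k : Fin a,
              MvPolynomial.C (((ψ g : Matrix (Fin a) (Fin a) F)) k j) *
                MvPolynomial.X k)) :
    ∀ ξ : F, IsPrimitiveRoot ξ p → ∀ i : ℕ, i ≤ n →
      ((∃ x : FractionRing (MvPolynomial (Fin a) F),
          ∏ g : {g : Multiplicative (ZMod a) // g ^ p ^ (n - i) = 1},
            (g : Multiplicative (ZMod a)) • x
          = algebraMap (MvPolynomial (Fin a) F) (FractionRing (MvPolynomial (Fin a) F))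
              (MvPolynomial.C ξ)) ↔ t + 1 ≤ i) := by
  intro ξ hξ i hi
  classical
  have hpp : 0 < p := hp.pos
  have halg_inj : Function.Injective
      (algebraMap (MvPolynomial (Fin a) F) (FractionRing (MvPolynomial (Fin a) F))) :=
    IsFractionRing.injective (MvPolynomial (Fin a) F) (FractionRing (MvPolynomial (Fin a) F))
  have hcard : Fintype.card {g : Multiplicative (ZMod a) // g ^ p ^ (n - i) = 1}
      = p ^ (n - i) := by
    refine card_torsion a (p ^ (n - i)) (p ^ i) (by positivity) (by positivity) ?_
    rw [ha, ← pow_add]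
    congr 1
    omega
  have hξ0 : ξ ≠ 0 := by
    intro h
    have h1 := hξ.pow_eq_one
    rw [h, zero_pow hp.ne_zero] at h1
    exact one_ne_zero h1.symm
  have hξne1 : ξ ≠ 1 := hξ.ne_one hp.one_lt
  have honemem : ((1 : Multiplicative (ZMod a)) ^ p ^ (n - i) = 1) := one_pow _
  constructor
  · -- hard direction
    rintro ⟨x, hx⟩
    by_contra hti
    push_neg at hti
    have hit : i ≤ t := by omega
    let f : Multiplicative (ZMod a) → MvPolynomial (Fin a) F →+* MvPolynomial (Fin a) F :=
      fun g =>
        (MvPolynomial.aeval (fun j : Fin a =>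
          ∑ k : Fin a, MvPolynomial.C (((ψ g : Matrix (Fin a) (Fin a) F)) k j)
            * MvPolynomial.X k) : MvPolynomial (Fin a) F →ₐ[F] MvPolynomial (Fin a) F).toRingHom
    have hfC : ∀ (g : Multiplicative (ZMod a)) (c : F),
        f g (MvPolynomial.C c) = MvPolynomial.C c := by
      intro g c
      show (MvPolynomial.aeval (fun j : Fin a =>
          ∑ k : Fin a, MvPolynomial.C (((ψ g : Matrix (Fin a) (Fin a) F)) k j)
            * MvPolynomial.X k)) (MvPolynomial.C c) = MvPolynomial.C c
      rw [MvPolynomial.aeval_C, MvPolynomial.algebraMap_eq]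
    have hfX : ∀ (g : Multiplicative (ZMod a)) (j : Fin a), f g (MvPolynomial.X j)
        = ∑ k : Fin a, MvPolynomial.C (((ψ g : Matrix (Fin a) (Fin a) F)) k j)
          * MvPolynomial.X k := by
      intro g j
      show (MvPolynomial.aeval (fun j : Fin a =>
          ∑ k : Fin a, MvPolynomial.C (((ψ g : Matrix (Fin a) (Fin a) F)) k j)
            * MvPolynomial.X k)) (MvPolynomial.X j) = _
      rw [MvPolynomial.aeval_X]
    have hcompat : ∀ (g : Multiplicative (ZMod a)) (P : MvPolynomial (Fin a) F),
        algebraMap (MvPolynomial (Fin a) F) (FractionRing (MvPolynomial (Fin a) F)) (f g P)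
          = g • algebraMap (MvPolynomial (Fin a) F)
              (FractionRing (MvPolynomial (Fin a) F)) P := by
      intro g P
      induction P using MvPolynomial.induction_on with
      | C c => rw [hfC, hfix]
      | add P Q hP hQ => rw [map_add, map_add, map_add, smul_add, hP, hQ]
      | mul_X P j hP =>
          rw [map_mul, map_mul, map_mul, smul_mul', hP, hfX, hlin]
    have hmulf : ∀ (g h : Multiplicative (ZMod a)) (P : MvPolynomial (Fin a) F),
        f g (f h P) = f (g * h) P := by
      intro g h P
      apply halg_inj
      rw [hcompat, hcompat, hcompat, mul_smul]
    have honef : ∀ P : MvPolynomial (Fin a) F, f 1 P = P := by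
      intro P
      apply halg_inj
      rw [hcompat, one_smul]
    let σ : Multiplicative (ZMod a) →* (MvPolynomial (Fin a) F ≃+* MvPolynomial (Fin a) F) :=
      MonoidHom.mk' (fun g => RingEquiv.ofRingHom (f g) (f g⁻¹)
          (RingHom.ext fun P => by
            show f g (f g⁻¹ P) = P
            rw [hmulf, mul_inv_cancel, honef])
          (RingHom.ext fun P => by
            show f g⁻¹ (f g P) = P
            rw [hmulf, inv_mul_cancel, honef]))
        (fun g h => by
          apply RingEquiv.ext
          intro P
          exact (hmulf g h P).symm)
    have hσf : ∀ (g : Multiplicative (ZMod a)) (P : MvPolynomial (Fin a) F),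
        σ g P = f g P := fun _ _ => rfl
    obtain ⟨r, s, hsmem, hxeq⟩ :=
      IsFractionRing.div_surjective (A := MvPolynomial (Fin a) F) x
    have hs0 : s ≠ 0 := nonZeroDivisors.ne_zero hsmem
    have hσne : ∀ (g : Multiplicative (ZMod a)) (y : MvPolynomial (Fin a) F),
        y ≠ 0 → σ g y ≠ 0 := fun g y hy h0 =>
      hy ((σ g).injective (h0.trans (map_zero _).symm))
    have hprodne : ∀ y : MvPolynomial (Fin a) F, y ≠ 0 →
        (∏ g : {g : Multiplicative (ZMod a) // g ^ p ^ (n - i) = 1},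
          σ (g : Multiplicative (ZMod a)) y) ≠ 0 := fun y hy =>
      Finset.prod_ne_zero_iff.mpr fun g _ => hσne _ _ hy
    have hgx : ∀ g : Multiplicative (ZMod a), g • x
        = algebraMap (MvPolynomial (Fin a) F) (FractionRing (MvPolynomial (Fin a) F)) (σ g r)
          / algebraMap (MvPolynomial (Fin a) F) (FractionRing (MvPolynomial (Fin a) F))
              (σ g s) := by
      intro g
      rw [← hxeq, div_eq_mul_inv, smul_mul', smul_inv'', hσf, hσf, hcompat, hcompat,
        ← div_eq_mul_inv]
    have hxprod : (∏ g : {g : Multiplicative (ZMod a) // g ^ p ^ (n - i) = 1},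
          (g : Multiplicative (ZMod a)) • x)
        = algebraMap (MvPolynomial (Fin a) F) (FractionRing (MvPolynomial (Fin a) F))
            (∏ g : {g : Multiplicative (ZMod a) // g ^ p ^ (n - i) = 1},
              σ (g : Multiplicative (ZMod a)) r)
          / algebraMap (MvPolynomial (Fin a) F) (FractionRing (MvPolynomial (Fin a) F))
            (∏ g : {g : Multiplicative (ZMod a) // g ^ p ^ (n - i) = 1},
              σ (g : Multiplicative (ZMod a)) s) := by
      rw [map_prod, map_prod, ← Finset.prod_div_distrib]
      exact Finset.prod_congr rfl fun g _ => hgx (g : Multiplicative (ZMod a))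
    rw [hxprod] at hx
    have hsprodL : algebraMap (MvPolynomial (Fin a) F) (FractionRing (MvPolynomial (Fin a) F))
        (∏ g : {g : Multiplicative (ZMod a) // g ^ p ^ (n - i) = 1},
          σ (g : Multiplicative (ZMod a)) s) ≠ 0 :=
      fun h0 => hprodne s hs0 (halg_inj (h0.trans (map_zero _).symm))
    have hx' := (div_eq_iff hsprodL).mp hx
    rw [← map_mul] at hx'
    have hReq := halg_inj hx'
    have hr0 : r ≠ 0 := by
      intro h0
      rw [h0] at hReq
      have hzero : (∏ g : {g : Multiplicative (ZMod a) // g ^ p ^ (n - i) = 1},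
          σ (g : Multiplicative (ZMod a)) (0 : MvPolynomial (Fin a) F)) = 0 :=
        Finset.prod_eq_zero (Finset.mem_univ
          (⟨1, honemem⟩ : {g : Multiplicative (ZMod a) // g ^ p ^ (n - i) = 1}))
          (map_zero _)
      rw [hzero] at hReq
      have hCξ : (MvPolynomial.C ξ : MvPolynomial (Fin a) F) ≠ 0 := fun h => hξ0 (by
        have h1 := congrArg (MvPolynomial.coeff 0) h
        simpa using h1)
      exact (mul_ne_zero hCξ (hprodne s hs0)) hReq.symm
    have hCunit : IsUnit (MvPolynomial.C ξ : MvPolynomial (Fin a) F) := by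
      refine IsUnit.of_mul_eq_one (a := MvPolynomial.C ξ) (MvPolynomial.C ξ⁻¹) ?_
      rw [← map_mul, mul_inv_cancel₀ hξ0, map_one]
    obtain ⟨w, hwu, hweq⟩ := norm_unit_key σ r s (MvPolynomial.C ξ) hr0 hs0 hCunit hReq
    have hconst : ∀ (g : Multiplicative (ZMod a)) (P : MvPolynomial (Fin a) F),
        MvPolynomial.constantCoeff (f g P) = MvPolynomial.constantCoeff P := by
      intro g P
      have hhom : (MvPolynomial.constantCoeff.comp (f g) : MvPolynomial (Fin a) F →+* F)
          = MvPolynomial.constantCoeff := by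
        apply MvPolynomial.ringHom_ext
        · intro c
          simp [hfC]
        · intro j
          simp [hfX]
      exact congrFun (congrArg (fun h : MvPolynomial (Fin a) F →+* F => (h : _ → F)) hhom) P
    have hueq : ξ = (MvPolynomial.constantCoeff w) ^ p ^ (n - i) := by
      have h1 := congrArg (MvPolynomial.constantCoeff :
        MvPolynomial (Fin a) F →+* F) hweq
      rw [map_prod] at h1
      simp only [MvPolynomial.constantCoeff_C] at h1
      have h3 : ∀ g : {g : Multiplicative (ZMod a) // g ^ p ^ (n - i) = 1},
          MvPolynomial.constantCoeff (σ (g : Multiplicative (ZMod a)) w)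
            = MvPolynomial.constantCoeff w :=
        fun g => hconst (g : Multiplicative (ZMod a)) w
      rw [Finset.prod_congr rfl (fun g _ => h3 g), Finset.prod_const, Finset.card_univ,
        hcard] at h1
      exact h1
    set u : F := MvPolynomial.constantCoeff w with hudef
    have hu1 : u ^ p ^ (n - i + 1) = 1 := by
      rw [pow_succ, pow_mul, ← hueq, hξ.pow_eq_one]
    have hord : orderOf u ∣ p ^ (n - i + 1) := orderOf_dvd_of_pow_eq_one hu1
    obtain ⟨j, hjle, hordeq⟩ := (Nat.dvd_prime_pow hp).mp hord
    have hjtop : j = n - i + 1 := by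
      by_contra hne
      have hj' : j ≤ n - i := by omega
      have hdvd : orderOf u ∣ p ^ (n - i) := hordeq ▸ pow_dvd_pow p hj'
      have h4 : u ^ p ^ (n - i) = 1 := orderOf_dvd_iff_pow_eq_one.mp hdvd
      rw [← hueq] at h4
      exact hξne1 h4
    have hprim : IsPrimitiveRoot u (p ^ (n - i + 1)) := by
      have h := IsPrimitiveRoot.orderOf u
      rwa [hordeq, hjtop] at h
    have hbig : IsPrimitiveRoot (u ^ p ^ (t - i)) (p ^ (n - t + 1)) := by
      refine hprim.pow (by positivity) ?_
      rw [← pow_add]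
      congr 1
      omega
    exact hnoroot ⟨_, hbig⟩
  · -- easy direction
    intro hti
    obtain ⟨ζ, hζ⟩ := hroot
    have hxpow : ξ ^ p ^ (n - t) = 1 := by
      obtain ⟨c, hc⟩ : p ∣ p ^ (n - t) := dvd_pow_self p (by omega)
      rw [hc, pow_mul, hξ.pow_eq_one, one_pow]
    haveI : NeZero (p ^ (n - t)) := ⟨(pow_pos hpp _).ne'⟩
    obtain ⟨k, hklt, hk⟩ := hζ.eq_pow_of_pow_eq_one hxpow
    have hdvd1 : p ^ (n - t) ∣ k * p := by
      rw [← hζ.pow_eq_one_iff_dvd, pow_mul, hk, hξ.pow_eq_one]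
    have hdvd2 : p ^ (n - i) ∣ k := by
      have h1 : p ^ (n - t - 1) * p ∣ k * p := by
        have h2 : n - t - 1 + 1 = n - t := by omega
        rw [← pow_succ, h2]
        exact hdvd1
      have h3 : p ^ (n - t - 1) ∣ k := (Nat.mul_dvd_mul_iff_right hpp).mp h1
      exact dvd_trans (pow_dvd_pow p (by omega)) h3
    obtain ⟨j, hj⟩ := hdvd2
    refine ⟨algebraMap (MvPolynomial (Fin a) F) (FractionRing (MvPolynomial (Fin a) F))
      (MvPolynomial.C (ζ ^ j)), ?_⟩
    have hfixall : ∀ g : {g : Multiplicative (ZMod a) // g ^ p ^ (n - i) = 1},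
        (g : Multiplicative (ZMod a)) •
            algebraMap (MvPolynomial (Fin a) F) (FractionRing (MvPolynomial (Fin a) F))
              (MvPolynomial.C (ζ ^ j))
          = algebraMap (MvPolynomial (Fin a) F) (FractionRing (MvPolynomial (Fin a) F))
              (MvPolynomial.C (ζ ^ j)) :=
      fun g => hfix (g : Multiplicative (ZMod a)) (ζ ^ j)
    rw [Finset.prod_congr rfl (fun g _ => hfixall g), Finset.prod_const, Finset.card_univ,
      hcard, ← map_pow, ← map_pow, ← pow_mul, mul_comm j (p ^ (n - i)), ← hj, hk]
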